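/- Let 0 < α ≤ 1, λ > 0, t ≥ 0 and n be a natural number. Then the STFPP probability mass function with ν = 1 coincides with the time fractional Poisson probability mass function: ((-1)^n/n!) Σ_{k=0}^∞ [(-λ t^α)^k / Γ(kα+1)] · Γ(k+1)/Γ(k+1-n) = ((λ t^α)^n/n!) Σ_{k=0}^∞ ((k+n)!/k!) · (-λ t^α)^k / Γ((k+n)α+1). -/

import Mathlib

open Real

theorem stfpp_nu_one_eq_tfpp (α lam t : ℝ) (hα0 : 0 < α) (hα1 : α ≤ 1)
    (hlam : 0 < lam) (ht : 0 ≤ t) (n : ℕ) :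
    ((-1) ^ n / n.factorial) * ∑' k : ℕ,
        (-lam * t ^ α) ^ k / Real.Gamma ((k : ℝ) * α + 1) *
          (Real.Gamma ((k : ℝ) + 1) / Real.Gamma ((k : ℝ) + 1 - n)) =
      ((lam * t ^ α) ^ n / n.factorial) * ∑' k : ℕ,
        (((k + n).factorial : ℝ) / k.factorial) * (-lam * t ^ α) ^ k /
          Real.Gamma (((k : ℝ) + n) * α + 1) := by
  set x : ℝ := lam * t ^ α with hx
  have hneg : -lam * t ^ α = -x := by rw [hx]; ring
  rw [hneg]
  set g : ℕ → ℝ := fun k =>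
    (-x) ^ k / Real.Gamma ((k : ℝ) * α + 1) *
      (Real.Gamma ((k : ℝ) + 1) / Real.Gamma ((k : ℝ) + 1 - n)) with hg
  have hg0 : ∀ k, k < n → g k = 0 := by
    intro k hk
    have h1 : ((k : ℝ) + 1 - n) = -((n - (k + 1) : ℕ) : ℝ) := by
      have : k + 1 ≤ n := hk
      push_cast [Nat.cast_sub this]
      ring
    simp [hg, h1, Real.Gamma_neg_nat_eq_zero]
  have hinj : Function.Injective (fun j : ℕ => j + n) := add_left_injective n
  have hsupp : Function.support g ⊆ Set.range (fun j : ℕ => j + n) := by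
    intro k hk
    by_contra hr
    apply hk
    apply hg0
    by_contra hlt
    exact hr ⟨k - n, by simp [Nat.sub_add_cancel (le_of_not_gt hlt)]⟩
  have hre : ∑' j : ℕ, g (j + n) = ∑' k : ℕ, g k := hinj.tsum_eq hsupp
  rw [← hre]
  rw [← tsum_mul_left, ← tsum_mul_left]
  apply tsum_congr
  intro j
  have hG1 : Real.Gamma (((j + n : ℕ) : ℝ) + 1) = ((j + n).factorial : ℝ) :=
    Real.Gamma_nat_eq_factorial (j + n)
  have hG2 : Real.Gamma (((j + n : ℕ) : ℝ) + 1 - n) = (j.factorial : ℝ) := by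
    have : ((j + n : ℕ) : ℝ) + 1 - n = (j : ℝ) + 1 := by push_cast; ring
    rw [this, Real.Gamma_nat_eq_factorial]
  have hc : (((j + n : ℕ) : ℝ)) * α = ((j : ℝ) + n) * α := by push_cast; ring
  have hpow : (-x) ^ (j + n) = (-x) ^ j * ((-1 : ℝ) ^ n * x ^ n) := by
    rw [pow_add, neg_pow x n]
  simp only [hg, hG1, hG2, hc, hpow]
  have h2 : ((-1 : ℝ)) ^ n * (-1 : ℝ) ^ n = 1 := by rw [← mul_pow]; norm_num
  field_simp
  linear_combination ((-x) ^ j * x ^ n) * h2
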